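/- For every positive even integer m, there exist infinitely many primes p₀ such that for all positive integers α, L_m(p₀^α) + L_m^{(2)}(p₀^α) > p₀^α. -/

import Mathlib

open Finset

/-- The Schemmel totient function: `L m 0 = 0`, `L m 1 = 1`, and for `n > 1`,
`L m n = ∏ p^(α-1) (p - m)` over the canonical factorization of `n` if every
prime divisor of `n` exceeds `m`, and `0` otherwise. -/
def L (m n : ℕ) : ℕ :=
  if n ≤ 1 then n
  else if ∀ p ∈ n.primeFactors, m < p then
    ∏ p ∈ n.primeFactors, p ^ (n.factorization p - 1) * (p - m)
  else 0

lemma L_eq_prod {m n : ℕ} (h1 : 1 < n) (h : ∀ p ∈ n.primeFactors, m < p) :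
    L m n = ∏ p ∈ n.primeFactors, p ^ (n.factorization p - 1) * (p - m) := by
  rw [L, if_neg (by omega), if_pos h]

lemma L_prime_pow {m p α : ℕ} (hp : p.Prime) (hmp : m < p) (hα : 1 ≤ α) :
    L m (p ^ α) = p ^ (α - 1) * (p - m) := by
  have h1 : 1 < p ^ α := Nat.one_lt_pow (by omega) hp.one_lt
  have hpf : (p ^ α).primeFactors = {p} := by
    rw [Nat.primeFactors_pow _ (by omega), Nat.Prime.primeFactors hp]
  rw [L_eq_prod h1 (by rw [hpf]; simpa), hpf, Finset.prod_singleton,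
    hp.factorization_pow]
  simp

lemma L_pow_mul {m p β k : ℕ} (hp : p.Prime) (hmp : m < p) (hβ : 1 ≤ β)
    (hk : 1 < k) (hpk : ¬ p ∣ k) (hall : ∀ q ∈ k.primeFactors, m < q) :
    L m (p ^ β * k) = p ^ (β - 1) * (p - m) * L m k := by
  have hk0 : k ≠ 0 := by omega
  have hppow : p ^ β ≠ 0 := pow_ne_zero _ hp.pos.ne'
  have hpf : (p ^ β * k).primeFactors = insert p k.primeFactors := by
    rw [Nat.primeFactors_mul hppow hk0, Nat.primeFactors_pow _ (by omega),
      hp.primeFactors, ← Finset.insert_eq]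
  have hpnot : p ∉ k.primeFactors := fun h => hpk (Nat.dvd_of_mem_primeFactors h)
  have h1 : 1 < p ^ β * k := by
    calc 1 < p ^ β := Nat.one_lt_pow (by omega) hp.one_lt
    _ ≤ p ^ β * k := Nat.le_mul_of_pos_right _ (by omega)
  have hfact : (p ^ β * k).factorization = (p ^ β).factorization + k.factorization :=
    Nat.factorization_mul hppow hk0
  have hallm : ∀ q ∈ (p ^ β * k).primeFactors, m < q := by
    rw [hpf]
    intro q hq
    rcases Finset.mem_insert.mp hq with rfl | hq
    · exact hmp
    · exact hall q hq
  rw [L_eq_prod h1 hallm, hpf, Finset.prod_insert hpnot]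
  have hfp : (p ^ β * k).factorization p = β := by
    rw [hfact]
    simp [hp.factorization_pow, Nat.factorization_eq_zero_of_not_dvd hpk]
  rw [hfp, L_eq_prod hk hall]
  congr 1
  refine Finset.prod_congr rfl fun q hq => ?_
  have hqp : q ≠ p := fun h => hpnot (h ▸ hq)
  have : (p ^ β * k).factorization q = k.factorization q := by
    rw [hfact]
    simp [hp.factorization_pow, Finsupp.single_eq_of_ne' (Ne.symm hqp)]
  rw [this]

lemma L_lower {m k q₀ : ℕ} (hk : 1 < k) (hall : ∀ q ∈ k.primeFactors, m < q)
    (hq₀ : q₀ ∈ k.primeFactors) : q₀ - m ≤ L m k := by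
  rw [L_eq_prod hk hall]
  have h1 : q₀ - m ≤ q₀ ^ (k.factorization q₀ - 1) * (q₀ - m) :=
    Nat.le_mul_of_pos_left _ (pow_pos (Nat.pos_of_mem_primeFactors hq₀) _)
  refine h1.trans (Finset.single_le_prod'
    (f := fun q => q ^ (k.factorization q - 1) * (q - m)) (fun q hq => ?_) hq₀)
  have h2 : 0 < q ^ (k.factorization q - 1) :=
    pow_pos (Nat.pos_of_mem_primeFactors hq) _
  have h3 : 0 < q - m := by have := hall q hq; omega
  exact Nat.one_le_iff_ne_zero.mpr (Nat.mul_ne_zero h2.ne' h3.ne')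

/-- The key pointwise fact: if `p` is an odd prime with `p > m`, `k = p - m` has
all its prime factors `> m`, and `L m k > m` and `k > m^2`, then the abundance
inequality holds for all prime powers `p^α`. -/
lemma key_ineq {m p : ℕ} (hm : 0 < m) (hp : p.Prime) (hmp : m < p)
    (hall : ∀ q ∈ (p - m).primeFactors, m < q)
    (hk2 : m * m < p - m) (hLk : m < L m (p - m)) :
    ∀ α : ℕ, 0 < α → p ^ α < L m (p ^ α) + (L m) ((L m) (p ^ α)) := by
  set k := p - m with hk_def
  have hpk : p = k + m := by omega
  have hk1 : 1 < k := by nlinarith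
  have hpndvd : ¬ p ∣ k := fun h => absurd (Nat.le_of_dvd (by omega) h) (by omega)
  intro α hα
  have hL1 : L m (p ^ α) = p ^ (α - 1) * k := L_prime_pow hp hmp hα
  rcases Nat.lt_or_ge α 2 with h2 | h2
  · -- α = 1
    have hα1 : α = 1 := by omega
    subst hα1
    rw [pow_one] at hL1 ⊢
    norm_num at hL1
    rw [hL1]
    omega
  · -- α ≥ 2
    obtain ⟨β, rfl⟩ : ∃ β, α = β + 2 := ⟨α - 2, by omega⟩
    have hL2 : L m (p ^ (β + 1) * k) = p ^ β * k * L m k := by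
      rw [L_pow_mul hp hmp (by omega) hk1 hpndvd hall, Nat.add_sub_cancel]
    have hrw : p ^ (β + 2 - 1) = p ^ (β + 1) := by norm_num
    rw [hL1, hrw, hL2]
    have hc : 0 < p ^ β := pow_pos hp.pos _
    have hkey : p * p < p * k + k * L m k := by nlinarith [hk2, hLk, hk1]
    calc p ^ (β + 2) = p ^ β * (p * p) := by ring
      _ < p ^ β * (p * k + k * L m k) := Nat.mul_lt_mul_of_pos_left hkey hc
      _ = p ^ (β + 1) * k + p ^ β * k * L m k := by ring

theorem infinitely_many_abundant_prime_powers (m : ℕ) (hm : 0 < m)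
    (hme : Even m) :
    {p : ℕ | p.Prime ∧ ∀ α : ℕ, 0 < α →
      p ^ α < L m (p ^ α) + (L m) ((L m) (p ^ α))}.Infinite := by
  have hm2 : 2 ≤ m := by rcases hme with ⟨r, rfl⟩; omega
  have hmm : m ≤ m * m := Nat.le_mul_of_pos_left m hm
  obtain ⟨q₀, hq₀ge, hq₀p⟩ := Nat.exists_infinite_primes (m * m + m + 1)
  set T : Finset ℕ := (Finset.range (m + 1)).filter (fun q => q.Prime ∧ q ≠ 2) with hT
  have hq₀T : q₀ ∉ T := by
    intro h
    simp only [hT, Finset.mem_filter, Finset.mem_range] at h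
    omega
  set t : Finset ℕ := insert q₀ T with ht
  have ht_prime : ∀ q ∈ t, q.Prime := by
    intro q hq
    rcases Finset.mem_insert.mp hq with rfl | hq
    · exact hq₀p
    · exact (Finset.mem_filter.mp hq).2.1
  have ht_ne : ∀ q ∈ t, q ≠ 0 := fun q hq => (ht_prime q hq).pos.ne'
  set a : ℕ → ℕ := fun q => if q = q₀ then m else if m % q = 1 then 2 else 1 with ha
  have hpp : (↑t : Set ℕ).Pairwise (Function.onFun Nat.Coprime id) := by
    intro x hx y hy hxy
    exact (Nat.coprime_primes (ht_prime x hx) (ht_prime y hy)).mpr hxy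
  obtain ⟨r, hr⟩ := Nat.chineseRemainderOfFinset a id t (fun i hi => ht_ne i hi) hpp
  set M : ℕ := ∏ q ∈ t, q with hM
  have hM0 : M ≠ 0 := Finset.prod_ne_zero_iff.mpr ht_ne
  haveI : NeZero M := ⟨hM0⟩
  have hadvd : ∀ q ∈ t, ¬ q ∣ a q := by
    intro q hq hdvd
    rcases Finset.mem_insert.mp hq with rfl | hqT
    · simp only [ha, if_pos rfl] at hdvd
      exact absurd (Nat.le_of_dvd hm hdvd) (by omega)
    · have h3 : 3 ≤ q := by
        have h := (Finset.mem_filter.mp hqT).2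
        have := h.1.two_le
        omega
      have hqne : q ≠ q₀ := by rintro rfl; exact hq₀T hqT
      simp only [ha, if_neg hqne] at hdvd
      split_ifs at hdvd with h
      · exact absurd (Nat.le_of_dvd (by omega) hdvd) (by omega)
      · exact absurd (Nat.le_of_dvd (by omega) hdvd) (by omega)
  have hrq : ∀ q ∈ t, ¬ q ∣ r := by
    intro q hq hdvd
    have h1 : (r : ℕ) % q = a q % q := hr q hq
    have h2 : (r : ℕ) % q = 0 := by obtain ⟨c, hc⟩ := hdvd; simp [hc, Nat.mul_mod_right]
    exact hadvd q hq (Nat.dvd_of_mod_eq_zero (by omega))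
  have hcop : Nat.Coprime (r : ℕ) M := Nat.Coprime.prod_right (fun q hq =>
    (((ht_prime q hq).coprime_iff_not_dvd).mpr (hrq q hq)).symm)
  have hunit : IsUnit (((r : ℕ) : ZMod M)) := (ZMod.isUnit_iff_coprime (r : ℕ) M).mpr hcop
  have hD := Nat.infinite_setOfPred_prime_and_eq_mod (q := M) hunit
  refine Set.Infinite.mono ?_ (hD.diff (Set.finite_Iic (m + 2)))
  rintro p ⟨⟨hp, hpr⟩, hple⟩
  simp only [Set.mem_Iic, not_le] at hple
  have hmp : m < p := by omega
  have hmod : ∀ q ∈ t, p ≡ a q [MOD q] := by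
    intro q hq
    have h1 : p ≡ (r : ℕ) [MOD M] := (ZMod.natCast_eq_natCast_iff p (r : ℕ) M).mp hpr
    exact (h1.of_dvd (Finset.dvd_prod_of_mem _ hq)).trans (hr q hq)
  have hq₀k : q₀ ∣ p - m := by
    have h := hmod q₀ (Finset.mem_insert_self _ _)
    have haq : a q₀ = m := by simp [ha]
    rw [haq] at h
    exact (Nat.modEq_iff_dvd' (le_of_lt hmp)).mp h.symm
  have hpodd : Odd p := hp.odd_of_ne_two (by omega)
  have hkodd : Odd (p - m) := Nat.Odd.sub_even (le_of_lt hmp) hpodd hme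
  have hall : ∀ q ∈ (p - m).primeFactors, m < q := by
    intro q hq
    have hqp : q.Prime := Nat.prime_of_mem_primeFactors hq
    have hqd : q ∣ p - m := Nat.dvd_of_mem_primeFactors hq
    by_contra hle
    push_neg at hle
    have hq2 : q ≠ 2 := by
      rintro rfl
      have := Nat.odd_iff.mp hkodd
      omega
    have hqT : q ∈ t := Finset.mem_insert_of_mem (by
      simp only [hT, Finset.mem_filter, Finset.mem_range]
      exact ⟨by omega, hqp, hq2⟩)
    have h1 : p ≡ a q [MOD q] := hmod q hqT
    have h2 : m ≡ p [MOD q] := (Nat.modEq_iff_dvd' (le_of_lt hmp)).mpr hqd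
    have h3 : m ≡ a q [MOD q] := h2.trans h1
    have hqne : q ≠ q₀ := by omega
    have h3q : 3 ≤ q := by have := hqp.two_le; omega
    rw [ha] at h3
    simp only [if_neg hqne] at h3
    unfold Nat.ModEq at h3
    split_ifs at h3 with h
    · rw [Nat.mod_eq_of_lt (show 2 < q by omega)] at h3; omega
    · rw [Nat.mod_eq_of_lt (show 1 < q by omega)] at h3; omega
  have hkq₀ : q₀ ≤ p - m := Nat.le_of_dvd (by omega) hq₀k
  have hk2 : m * m < p - m := by omega
  have hq₀mem : q₀ ∈ (p - m).primeFactors :=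
    Nat.mem_primeFactors.mpr ⟨hq₀p, hq₀k, by omega⟩
  have hLk : m < L m (p - m) := by
    have := L_lower (m := m) (by omega) hall hq₀mem
    omega
  exact ⟨hp, key_ineq hm hp hmp hall hk2 hLk⟩
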